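/- For k ≥ 2 and n ≥ 1, the group ⟨β, y | y^{-k} = β^{k-1}, β^{n+1} = 1⟩ has y^k central with quotient isomorphic to Z_k * Z_j, where j = gcd(k − 1, n + 1); it is abelian when j = 1 and contains a non-abelian free subgroup when j ≥ 2 and (k,j) ≠ (2,2). -/

import Mathlib

/-- `⟨β, y | y^{-k} = β^{k-1}, β^{n+1} = 1⟩`, generators `β = of 0`, `y = of 1`. -/
def relsFam2a (k n : ℕ) : Set (FreeGroup (Fin 2)) :=
  let b := FreeGroup.of (0 : Fin 2)
  let y := FreeGroup.of (1 : Fin 2)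
  {(y ^ k)⁻¹ * (b ^ (k - 1))⁻¹, b ^ (n + 1)}

open Monoid


namespace Fam2aAux

variable {ι : Type*} [DecidableEq ι] {G : ι → Type*} [∀ i, Group (G i)]
  [∀ i, DecidableEq (G i)]

/-- Set of reduced words with a given two-letter prefix. -/
def pref2 (x y : Σ i, G i) : Set (CoprodI.Word G) := {w | ∃ t, w.toList = x :: y :: t}

theorem fstIdx_eq {w : CoprodI.Word G} {i : ι} {m : G i} {t : List (Σ i, G i)}
    (h : w.toList = ⟨i, m⟩ :: t) : w.fstIdx = some i := by
  simp [CoprodI.Word.fstIdx, h]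

theorem smul_toList_ne {i : ι} (m : G i) (hm : m ≠ 1) (w : CoprodI.Word G)
    (h : w.fstIdx ≠ some i) :
    (CoprodI.of m • w).toList = ⟨i, m⟩ :: w.toList := by
  have := CoprodI.Word.cons_eq_smul (m := m) (ls := w) (h1 := h) (h2 := hm)
  rw [← this, CoprodI.Word.cons_toList]

theorem destruct (w : CoprodI.Word G) (i : ι) (c : G i) (t : List (Σ i, G i))
    (h : w.toList = ⟨i, c⟩ :: t) :
    ∃ (w' : CoprodI.Word G) (h1 : w'.fstIdx ≠ some i) (hc : c ≠ 1),
      w'.toList = t ∧ w = CoprodI.Word.cons c w' h1 hc := by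
  have hchain := w.chain_ne
  rw [h] at hchain
  refine ⟨⟨t, fun l hl => w.ne_one l (h ▸ List.mem_cons_of_mem _ hl), hchain.tail⟩, ?_, ?_, rfl, ?_⟩
  · rcases List.isChain_cons.mp hchain with ⟨hhead, -⟩
    intro heq
    rcases Option.map_eq_some_iff.mp heq with ⟨l, hl, hfst⟩
    exact hhead l hl (by simp [hfst])
  · exact w.ne_one ⟨i, c⟩ (h ▸ List.mem_cons_self)
  · apply CoprodI.Word.ext
    simp [h]

theorem smul_cancel {i : ι} (m : G i) (w w' : CoprodI.Word G) (t : List (Σ i, G i))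
    (h : w.toList = ⟨i, m⁻¹⟩ :: t) (h' : w'.toList = t) (hw' : w'.fstIdx ≠ some i)
    (hc : m⁻¹ ≠ 1) (heq : w = CoprodI.Word.cons m⁻¹ w' hw' hc) :
    CoprodI.of m • w = w' := by
  rw [heq, CoprodI.Word.cons_eq_smul, smul_smul, ← map_mul, mul_inv_cancel, map_one, one_smul]

theorem S1 {i : ι} (m : G i) (hm : m ≠ 1) (w : CoprodI.Word G)
    (h : ∀ t, w.toList ≠ ⟨i, m⁻¹⟩ :: t) :
    (CoprodI.of m • w).fstIdx = some i := by
  rcases hl : w.toList with _ | ⟨⟨i', c⟩, t⟩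
  · exact fstIdx_eq (smul_toList_ne m hm w (by simp [CoprodI.Word.fstIdx, hl]))
  · by_cases hii : i' = i
    · subst hii
      obtain ⟨w', h1w, hc, htl, hw_eq⟩ := destruct w i' c t hl
      have hsm : CoprodI.of m • w = CoprodI.of (m * c) • w' := by
        rw [hw_eq, CoprodI.Word.cons_eq_smul, smul_smul, ← map_mul]
      by_cases hmc : m * c = 1
      · have hcm : c = m⁻¹ := eq_inv_of_mul_eq_one_right hmc
        rw [hcm] at hl
        exact absurd hl (h t)
      · rw [hsm]
        exact fstIdx_eq (smul_toList_ne (m * c) hmc w' h1w)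
    · refine fstIdx_eq (smul_toList_ne m hm w ?_)
      simp only [CoprodI.Word.fstIdx, hl, List.head?_cons, Option.map_some]
      intro hcontr
      have hii' : i' = i := by simpa using hcontr
      exact hii hii'

theorem KEY {i j : ι} (hij : i ≠ j) (p : G i) (q : G j) (hp : p ≠ 1) (hq : q ≠ 1)
    (w : CoprodI.Word G) (hw : ∀ t, w.toList ≠ ⟨j, q⁻¹⟩ :: ⟨i, p⁻¹⟩ :: t) :
    (CoprodI.of p • CoprodI.of q • w).fstIdx = some i := by
  by_cases hsplit : ∃ t, w.toList = ⟨j, q⁻¹⟩ :: t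
  · obtain ⟨t, ht⟩ := hsplit
    obtain ⟨w', h1w, hc, htl, hw_eq⟩ := destruct w j q⁻¹ t ht
    rw [smul_cancel q w w' t ht htl h1w hc hw_eq]
    refine S1 p hp w' ?_
    intro t' h'
    exact hw t' (by rw [ht, ← htl, h'])
  · have h1 : (CoprodI.of q • w).fstIdx = some j :=
      S1 q hq w (fun t h => hsplit ⟨t, h⟩)
    refine S1 p hp _ ?_
    intro t h
    have := fstIdx_eq h
    rw [h1] at this
    exact hij (Option.some.inj this).symm

theorem quad {i j : ι} (hij : i ≠ j) (p : G i) (q : G j) (hp : p ≠ 1) (hq : q ≠ 1)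
    (w : CoprodI.Word G) (hw : ∀ t, w.toList ≠ ⟨j, q⁻¹⟩ :: ⟨i, p⁻¹⟩ :: t) :
    ∃ t, ((CoprodI.of p * CoprodI.of q * CoprodI.of p * CoprodI.of q) • w).toList
      = ⟨i, p⟩ :: ⟨j, q⟩ :: t := by
  have h1 := KEY hij p q hp hq w hw
  have hne1 : (CoprodI.of p • CoprodI.of q • w).fstIdx ≠ some j := by
    rw [h1]; simp [hij]
  have h2 : (CoprodI.of q • (CoprodI.of p • CoprodI.of q • w)).toList
      = ⟨j, q⟩ :: (CoprodI.of p • CoprodI.of q • w).toList :=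
    smul_toList_ne q hq _ hne1
  have h3 : (CoprodI.of p • (CoprodI.of q • (CoprodI.of p • CoprodI.of q • w))).toList
      = ⟨i, p⟩ :: ⟨j, q⟩ :: (CoprodI.of p • CoprodI.of q • w).toList := by
    have hne2 : (CoprodI.of q • (CoprodI.of p • CoprodI.of q • w)).fstIdx ≠ some i := by
      rw [fstIdx_eq h2]; simp [Ne.symm hij]
    rw [smul_toList_ne p hp _ hne2, h2]
  refine ⟨(CoprodI.of p • CoprodI.of q • w).toList, ?_⟩
  rw [mul_smul, mul_smul, mul_smul]
  exact h3


theorem pref2_disjoint {x y x' y' : Σ i, G i} (h : x ≠ x' ∨ y ≠ y') :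
    Disjoint (pref2 x y) (pref2 x' y') := by
  rw [Set.disjoint_left]
  rintro w ⟨t, ht⟩ ⟨t', ht'⟩
  rw [ht] at ht'
  rcases h with h | h
  · exact h (List.cons.inj ht').1
  · exact h (List.cons.inj (List.cons.inj ht').2).1

theorem pref2_nonempty {i j : ι} (hij : i ≠ j) (p : G i) (q : G j) (hp : p ≠ 1) (hq : q ≠ 1) :
    (pref2 (⟨i, p⟩ : Σ i, G i) ⟨j, q⟩).Nonempty := by
  refine ⟨⟨[⟨i, p⟩, ⟨j, q⟩], ?_, ?_⟩, [], rfl⟩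
  · intro l hl
    simp only [List.mem_cons, List.not_mem_nil, or_false] at hl
    rcases hl with rfl | rfl
    · exact hp
    · exact hq
  · simp [hij]

theorem pairwise2 {α : Type*} {f : Fin 2 → Set α} (h : Disjoint (f 0) (f 1)) :
    Pairwise (Function.onFun Disjoint f) := by
  intro i j hij
  fin_cases i <;> fin_cases j <;>
    first
      | exact absurd rfl hij
      | exact h
      | exact h.symm

/-- The ping-pong free pair in a free product of two groups with `|A| ≥ 3`, `|B| ≥ 2`. -/
theorem freepair (G : Fin 2 → Type) [∀ i, Group (G i)] [∀ i, DecidableEq (G i)]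
    (a : G 0) (b : G 1) (ha : a ≠ 1) (ha2 : a * a ≠ 1) (hb : b ≠ 1) :
    Function.Injective (FreeGroup.lift
      ![CoprodI.of a * CoprodI.of b * CoprodI.of a * CoprodI.of b,
        CoprodI.of a⁻¹ * CoprodI.of b * CoprodI.of a⁻¹ * CoprodI.of b]) := by
  classical
  have ha' : a⁻¹ ≠ 1 := inv_ne_one.mpr ha
  have hb' : b⁻¹ ≠ 1 := inv_ne_one.mpr hb
  have haa : a ≠ a⁻¹ := by
    intro h
    apply ha2
    nth_rewrite 2 [h]
    exact mul_inv_cancel a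
  have h01 : (0 : Fin 2) ≠ 1 := by decide
  apply FreeGroup.injective_lift_of_ping_pong
    ![CoprodI.of a * CoprodI.of b * CoprodI.of a * CoprodI.of b,
      CoprodI.of a⁻¹ * CoprodI.of b * CoprodI.of a⁻¹ * CoprodI.of b]
    ![pref2 ⟨0, a⟩ ⟨1, b⟩, pref2 ⟨0, a⁻¹⟩ ⟨1, b⟩]
    ![pref2 ⟨1, b⁻¹⟩ ⟨0, a⁻¹⟩, pref2 ⟨1, b⁻¹⟩ ⟨0, a⟩]
  · rw [Fin.forall_fin_two]
    exact ⟨pref2_nonempty h01 a b ha hb, pref2_nonempty h01 a⁻¹ b ha' hb⟩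
  · refine pairwise2 ?_
    simp only [Matrix.cons_val_zero, Matrix.cons_val_one, Matrix.head_cons]
    exact pref2_disjoint (Or.inl (by simp [haa]))
  · refine pairwise2 ?_
    simp only [Matrix.cons_val_zero, Matrix.cons_val_one, Matrix.head_cons]
    exact pref2_disjoint (Or.inr (by simp [Ne.symm haa]))
  · rw [Fin.forall_fin_two]
    constructor <;> (rw [Fin.forall_fin_two]; constructor) <;>
      (simp only [Matrix.cons_val_zero, Matrix.cons_val_one, Matrix.head_cons];
       exact pref2_disjoint (Or.inl (fun h => h01 (congrArg Sigma.fst h))))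
  · -- hX
    rw [Fin.forall_fin_two]
    constructor
    · rintro v ⟨w, hw, rfl⟩
      simp only [Matrix.cons_val_zero] at hw ⊢
      have hw' : ∀ t, w.toList ≠ ⟨1, b⁻¹⟩ :: ⟨0, a⁻¹⟩ :: t := fun t h => hw ⟨t, h⟩
      obtain ⟨t, ht⟩ := quad h01 a b ha hb w hw'
      exact ⟨t, ht⟩
    · rintro v ⟨w, hw, rfl⟩
      simp only [Matrix.cons_val_one, Matrix.head_cons] at hw ⊢
      have hw' : ∀ t, w.toList ≠ ⟨1, b⁻¹⟩ :: ⟨0, a⁻¹⁻¹⟩ :: t := by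
        rw [inv_inv]; exact fun t h => hw ⟨t, h⟩
      obtain ⟨t, ht⟩ := quad h01 a⁻¹ b ha' hb w hw'
      exact ⟨t, ht⟩
  · -- hY
    rw [Fin.forall_fin_two]
    constructor
    · rintro v ⟨w, hw, rfl⟩
      simp only [Matrix.cons_val_zero, Pi.inv_apply] at hw ⊢
      have hxinv : (CoprodI.of a * CoprodI.of b * CoprodI.of a * CoprodI.of b)⁻¹
          = CoprodI.of b⁻¹ * CoprodI.of a⁻¹ * CoprodI.of b⁻¹ * CoprodI.of a⁻¹ := by
        simp [mul_assoc, map_inv]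
      rw [hxinv]
      have hw' : ∀ t, w.toList ≠ ⟨0, a⁻¹⁻¹⟩ :: ⟨1, b⁻¹⁻¹⟩ :: t := by
        rw [inv_inv, inv_inv]; exact fun t h => hw ⟨t, h⟩
      obtain ⟨t, ht⟩ := quad (Ne.symm h01) b⁻¹ a⁻¹ hb' ha' w hw'
      exact ⟨t, ht⟩
    · rintro v ⟨w, hw, rfl⟩
      simp only [Matrix.cons_val_one, Matrix.head_cons, Matrix.cons_val_zero, Pi.inv_apply] at hw ⊢
      have hxinv : (CoprodI.of a⁻¹ * CoprodI.of b * CoprodI.of a⁻¹ * CoprodI.of b)⁻¹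
          = CoprodI.of b⁻¹ * CoprodI.of a * CoprodI.of b⁻¹ * CoprodI.of a := by
        simp [mul_assoc, map_inv]
      rw [hxinv]
      have hw' : ∀ t, w.toList ≠ ⟨0, a⁻¹⟩ :: ⟨1, b⁻¹⁻¹⟩ :: t := by
        rw [inv_inv]; exact fun t h => hw ⟨t, h⟩
      obtain ⟨t, ht⟩ := quad (Ne.symm h01) b⁻¹ a hb' ha w hw'
      exact ⟨t, ht⟩


theorem pow_ofAdd_one {m : ℕ} (N : ℕ) (h : ((N : ZMod m)) = 0) :
    (Multiplicative.ofAdd (1 : ZMod m)) ^ N = 1 := by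
  rw [← ofAdd_nsmul, nsmul_eq_mul, mul_one, h]
  rfl

theorem ofAdd_one_ne {m : ℕ} (hm : 2 ≤ m) : (Multiplicative.ofAdd (1 : ZMod m)) ≠ 1 := by
  haveI : NeZero m := ⟨by omega⟩
  intro h
  have h1 : (1 : ZMod m) = 0 := by simpa using h
  have h2 : ((1 : ℕ) : ZMod m) = 0 := by simpa using h1
  have h3 := (ZMod.natCast_eq_zero_iff 1 m).mp h2
  have := Nat.le_of_dvd one_pos h3
  omega

theorem ofAdd_sq_ne {m : ℕ} (hm : 3 ≤ m) :
    (Multiplicative.ofAdd (1 : ZMod m)) * (Multiplicative.ofAdd (1 : ZMod m)) ≠ 1 := by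
  haveI : NeZero m := ⟨by omega⟩
  intro h
  have h1 : ((1 : ZMod m) + 1) = 0 := by
    have := h
    rw [← ofAdd_add, ofAdd_eq_one] at this
    exact this
  have h2 : ((2 : ℕ) : ZMod m) = 0 := by push_cast; simpa [one_add_one_eq_two] using h1
  have h3 := (ZMod.natCast_eq_zero_iff 2 m).mp h2
  have := Nat.le_of_dvd (by norm_num) h3
  omega

def zmodMulHom {Q : Type*} [Group Q] (m : ℕ) (z : Q) (h : z ^ m = 1) :
    Multiplicative (ZMod m) →* Q :=
  AddMonoidHom.toMultiplicativeLeft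
    (ZMod.lift m ⟨zmultiplesHom (Additive Q) (Additive.ofMul z), by
      show ((m : ℕ) : ℤ) • Additive.ofMul z = 0
      rw [natCast_zsmul, ← ofMul_pow, h]
      rfl⟩)

theorem zmodMulHom_ofAdd_one {Q : Type*} [Group Q] (m : ℕ) (z : Q) (h : z ^ m = 1) :
    zmodMulHom m z h (Multiplicative.ofAdd (1 : ZMod m)) = z := by
  simp only [zmodMulHom, AddMonoidHom.coe_toMultiplicativeLeft, Function.comp_apply, toAdd_ofAdd]
  rw [show (1 : ZMod m) = ((1 : ℤ) : ZMod m) by push_cast; rfl, ZMod.lift_coe]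
  simp [zmultiplesHom_apply]

theorem multZModHom_ext {m : ℕ} {Q : Type*} [Group Q] {f g : Multiplicative (ZMod m) →* Q}
    (h : f (Multiplicative.ofAdd 1) = g (Multiplicative.ofAdd 1)) : f = g := by
  refine MonoidHom.ext fun x => ?_
  obtain ⟨i, hi⟩ := ZMod.intCast_surjective (Multiplicative.toAdd x)
  have hx : x = Multiplicative.ofAdd ((i : ZMod m)) := by rw [hi]; rfl
  have hone : ((i : ZMod m)) = i • (1 : ZMod m) := by rw [zsmul_eq_mul, mul_one]
  rw [hx, hone, ofAdd_zsmul, map_zpow, map_zpow, h]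


def fam2aH (k j : ℕ) : Fin 2 → Type := fun i => Multiplicative (ZMod (![k, j] i))

instance (k j : ℕ) (i : Fin 2) : Group (fam2aH k j i) :=
  inferInstanceAs (Group (Multiplicative (ZMod (![k, j] i))))

instance (k j : ℕ) (i : Fin 2) : DecidableEq (fam2aH k j i) :=
  inferInstanceAs (DecidableEq (Multiplicative (ZMod (![k, j] i))))

def fam2aA (k j : ℕ) : fam2aH k j 0 := Multiplicative.ofAdd (1 : ZMod k)

def fam2aB (k j : ℕ) : fam2aH k j 1 := Multiplicative.ofAdd (1 : ZMod j)

theorem fam2aA_pow (k j N : ℕ) (h : ((N : ZMod k)) = 0) : (fam2aA k j) ^ N = 1 := by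
  exact pow_ofAdd_one (m := k) N h

theorem fam2aB_pow (k j N : ℕ) (h : ((N : ZMod j)) = 0) : (fam2aB k j) ^ N = 1 := by
  exact pow_ofAdd_one (m := j) N h

theorem fam2aA_ne (k j : ℕ) (h : 2 ≤ k) : fam2aA k j ≠ 1 := by
  exact ofAdd_one_ne (m := k) h

theorem fam2aA_sq_ne (k j : ℕ) (h : 3 ≤ k) : fam2aA k j * fam2aA k j ≠ 1 := by
  exact ofAdd_sq_ne (m := k) h

theorem fam2aB_ne (k j : ℕ) (h : 2 ≤ j) : fam2aB k j ≠ 1 := by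
  exact ofAdd_one_ne (m := j) h

end Fam2aAux

open Fam2aAux in
/-- In `G_{(2a)} = ⟨β, y | y^{-k} = β^{k-1}, β^{n+1} = 1⟩`, the element `y^k` is
central with quotient `ℤ/k ∗ ℤ/j`, `j = gcd(k − 1, n + 1)`; the group is abelian
when `j = 1` and contains a non-abelian free subgroup when `j ≥ 2`, `(k,j) ≠ (2,2)`. -/
theorem stmt_15 (k n : ℕ) (hk : 2 ≤ k) (hn : 1 ≤ n)
    (j : ℕ) (hj : j = Nat.gcd (k - 1) (n + 1)) :
    ((PresentedGroup.of 1 : PresentedGroup (relsFam2a k n)) ^ k ∈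
      Subgroup.center (PresentedGroup (relsFam2a k n))) ∧
    Nonempty
      ((PresentedGroup (relsFam2a k n) ⧸
          Subgroup.normalClosure
            ({(PresentedGroup.of 1 : PresentedGroup (relsFam2a k n)) ^ k} :
              Set (PresentedGroup (relsFam2a k n)))) ≃*
        Monoid.Coprod (Multiplicative (ZMod k)) (Multiplicative (ZMod j))) ∧
    (j = 1 → ∀ x y : PresentedGroup (relsFam2a k n), x * y = y * x) ∧
    (2 ≤ j → ¬(k = 2 ∧ j = 2) →
      ∃ f : FreeGroup (Fin 2) →* PresentedGroup (relsFam2a k n),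
        Function.Injective f) := by
  classical
  have hjne : j ≠ 0 := by
    rw [hj]
    intro h0
    have := Nat.gcd_eq_zero_iff.mp h0
    omega
  haveI : NeZero j := ⟨hjne⟩
  have hjdvd1 : j ∣ k - 1 := hj ▸ Nat.gcd_dvd_left _ _
  have hjdvd2 : j ∣ n + 1 := hj ▸ Nat.gcd_dvd_right _ _
  have hofmk : ∀ x : Fin 2,
      PresentedGroup.mk (relsFam2a k n) (FreeGroup.of x) = PresentedGroup.of x := fun _ => rfl
  have hmem1 : ((FreeGroup.of (1 : Fin 2)) ^ k)⁻¹ * ((FreeGroup.of (0 : Fin 2)) ^ (k - 1))⁻¹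
      ∈ relsFam2a k n := by simp [relsFam2a]
  have hmem2 : (FreeGroup.of (0 : Fin 2)) ^ (n + 1) ∈ relsFam2a k n := by simp [relsFam2a]
  have hrel1 : ((PresentedGroup.of (1 : Fin 2) : PresentedGroup (relsFam2a k n)) ^ k)⁻¹ *
      ((PresentedGroup.of (0 : Fin 2) : PresentedGroup (relsFam2a k n)) ^ (k - 1))⁻¹ = 1 := by
    have h0 : (PresentedGroup.mk (relsFam2a k n))
        (((FreeGroup.of (1 : Fin 2)) ^ k)⁻¹ * ((FreeGroup.of (0 : Fin 2)) ^ (k - 1))⁻¹) = 1 :=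
      (QuotientGroup.eq_one_iff _).mpr (Subgroup.subset_normalClosure hmem1)
    simpa [map_mul, map_inv, map_pow, hofmk] using h0
  have e2 : (PresentedGroup.of (0 : Fin 2) : PresentedGroup (relsFam2a k n)) ^ (n + 1) = 1 := by
    have h0 : (PresentedGroup.mk (relsFam2a k n)) ((FreeGroup.of (0 : Fin 2)) ^ (n + 1)) = 1 :=
      (QuotientGroup.eq_one_iff _).mpr (Subgroup.subset_normalClosure hmem2)
    simpa [map_pow, hofmk] using h0
  have e1 : (PresentedGroup.of (1 : Fin 2) : PresentedGroup (relsFam2a k n)) ^ k =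
      ((PresentedGroup.of (0 : Fin 2) : PresentedGroup (relsFam2a k n)) ^ (k - 1))⁻¹ := by
    have h0 := mul_eq_one_iff_eq_inv.mp hrel1
    rw [inv_inv] at h0
    rw [← h0, inv_inv]
  have e1' : (PresentedGroup.of (0 : Fin 2) : PresentedGroup (relsFam2a k n)) ^ (k - 1) =
      ((PresentedGroup.of (1 : Fin 2) : PresentedGroup (relsFam2a k n)) ^ k)⁻¹ := by
    rw [e1, inv_inv]
  -- Part 1: centrality
  have hcenter : (PresentedGroup.of 1 : PresentedGroup (relsFam2a k n)) ^ k ∈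
      Subgroup.center (PresentedGroup (relsFam2a k n)) := by
    rw [Subgroup.mem_center_iff]
    intro g
    have hg : g ∈ Subgroup.closure
        (Set.range (PresentedGroup.of : Fin 2 → PresentedGroup (relsFam2a k n))) := by
      rw [PresentedGroup.closure_range_of]
      trivial
    refine Subgroup.closure_induction
      (p := fun x _ => x * (PresentedGroup.of 1 : PresentedGroup (relsFam2a k n)) ^ k
        = (PresentedGroup.of 1 : PresentedGroup (relsFam2a k n)) ^ k * x)
      ?_ ?_ ?_ ?_ hg
    · rintro x ⟨i, rfl⟩
      fin_cases i
      · rw [e1]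
        exact ((Commute.refl (PresentedGroup.of 0)).pow_right (k - 1)).inv_right
      · exact (Commute.refl _).pow_right k
    · simp
    · intro x y _ _ hx hy
      rw [mul_assoc, hy, ← mul_assoc, hx, mul_assoc]
    · intro x _ hx
      exact Commute.inv_left hx
  refine ⟨hcenter, ?_, ?_, ?_⟩
  · -- Part 2: quotient iso
    have hCk : (Monoid.Coprod.inl (Multiplicative.ofAdd (1 : ZMod k)) :
        Monoid.Coprod (Multiplicative (ZMod k)) (Multiplicative (ZMod j))) ^ k = 1 := by
      rw [← map_pow, pow_ofAdd_one k (ZMod.natCast_self k), map_one]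
    have hCj1 : (Monoid.Coprod.inr (Multiplicative.ofAdd (1 : ZMod j)) :
        Monoid.Coprod (Multiplicative (ZMod k)) (Multiplicative (ZMod j))) ^ (k - 1) = 1 := by
      rw [← map_pow,
        pow_ofAdd_one (k - 1) ((ZMod.natCast_eq_zero_iff (k - 1) j).mpr hjdvd1), map_one]
    have hCj2 : (Monoid.Coprod.inr (Multiplicative.ofAdd (1 : ZMod j)) :
        Monoid.Coprod (Multiplicative (ZMod k)) (Multiplicative (ZMod j))) ^ (n + 1) = 1 := by
      rw [← map_pow,
        pow_ofAdd_one (n + 1) ((ZMod.natCast_eq_zero_iff (n + 1) j).mpr hjdvd2), map_one]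
    have hφrels : ∀ r ∈ relsFam2a k n, FreeGroup.lift
        (![Monoid.Coprod.inr (Multiplicative.ofAdd (1 : ZMod j)),
           Monoid.Coprod.inl (Multiplicative.ofAdd (1 : ZMod k))] :
          Fin 2 → Monoid.Coprod (Multiplicative (ZMod k)) (Multiplicative (ZMod j))) r = 1 := by
      intro r hr
      have hr' : r = ((FreeGroup.of (1 : Fin 2)) ^ k)⁻¹ * ((FreeGroup.of (0 : Fin 2)) ^ (k - 1))⁻¹
          ∨ r = (FreeGroup.of (0 : Fin 2)) ^ (n + 1) := by simpa [relsFam2a] using hr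
      rcases hr' with rfl | rfl
      · simp only [map_mul, map_inv, map_pow, FreeGroup.lift_apply_of, Matrix.cons_val_one,
          Matrix.head_cons, Matrix.cons_val_zero]
        rw [hCk, hCj1]
        simp
      · simp only [map_pow, FreeGroup.lift_apply_of, Matrix.cons_val_zero]
        exact hCj2
    have hker : Subgroup.normalClosure
        ({(PresentedGroup.of 1 : PresentedGroup (relsFam2a k n)) ^ k} :
          Set (PresentedGroup (relsFam2a k n))) ≤ (PresentedGroup.toGroup hφrels).ker := by
      apply Subgroup.normalClosure_le_normal
      rw [Set.singleton_subset_iff]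
      have : (PresentedGroup.toGroup hφrels) ((PresentedGroup.of 1) ^ k) = 1 := by
        rw [map_pow, PresentedGroup.toGroup.of]
        simpa using hCk
      exact this
    have hybar : (QuotientGroup.mk' (Subgroup.normalClosure
        ({(PresentedGroup.of 1 : PresentedGroup (relsFam2a k n)) ^ k} :
          Set (PresentedGroup (relsFam2a k n)))) (PresentedGroup.of 1)) ^ k = 1 := by
      rw [← map_pow]
      exact (QuotientGroup.eq_one_iff _).mpr
        (Subgroup.subset_normalClosure (Set.mem_singleton _))
    have hbbar1 : (QuotientGroup.mk' (Subgroup.normalClosure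
        ({(PresentedGroup.of 1 : PresentedGroup (relsFam2a k n)) ^ k} :
          Set (PresentedGroup (relsFam2a k n)))) (PresentedGroup.of 0)) ^ (k - 1) = 1 := by
      rw [← map_pow, e1', map_inv, map_pow, hybar, inv_one]
    have hbbarn : (QuotientGroup.mk' (Subgroup.normalClosure
        ({(PresentedGroup.of 1 : PresentedGroup (relsFam2a k n)) ^ k} :
          Set (PresentedGroup (relsFam2a k n)))) (PresentedGroup.of 0)) ^ (n + 1) = 1 := by
      rw [← map_pow, e2, map_one]
    have hbbar : (QuotientGroup.mk' (Subgroup.normalClosure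
        ({(PresentedGroup.of 1 : PresentedGroup (relsFam2a k n)) ^ k} :
          Set (PresentedGroup (relsFam2a k n)))) (PresentedGroup.of 0)) ^ j = 1 := by
      have hbez := Nat.gcd_eq_gcd_ab (k - 1) (n + 1)
      rw [← hj] at hbez
      have hzj : (QuotientGroup.mk' (Subgroup.normalClosure
          ({(PresentedGroup.of 1 : PresentedGroup (relsFam2a k n)) ^ k} :
            Set (PresentedGroup (relsFam2a k n)))) (PresentedGroup.of 0)) ^ (j : ℤ) = 1 := by
        rw [hbez, zpow_add, zpow_mul, zpow_mul, zpow_natCast, zpow_natCast, hbbar1, hbbarn,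
          one_zpow, one_zpow, one_mul]
      rwa [zpow_natCast] at hzj
    have hgf : (Monoid.Coprod.lift (zmodMulHom k _ hybar) (zmodMulHom j _ hbbar)).comp
        (QuotientGroup.lift _ (PresentedGroup.toGroup hφrels) hker) = MonoidHom.id _ := by
      apply QuotientGroup.monoidHom_ext
      apply PresentedGroup.ext
      rw [Fin.forall_fin_two]
      constructor
      · simp only [MonoidHom.comp_apply, MonoidHom.id_apply, QuotientGroup.mk'_apply,
          QuotientGroup.lift_mk, QuotientGroup.lift_mk', PresentedGroup.toGroup.of,
          Matrix.cons_val_zero, Monoid.Coprod.lift_apply_inr, zmodMulHom_ofAdd_one]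
      · simp only [MonoidHom.comp_apply, MonoidHom.id_apply, QuotientGroup.mk'_apply,
          QuotientGroup.lift_mk, QuotientGroup.lift_mk', PresentedGroup.toGroup.of,
          Matrix.cons_val_one, Matrix.head_cons, Matrix.cons_val_zero, Monoid.Coprod.lift_apply_inl,
          zmodMulHom_ofAdd_one]
    have hfg : (QuotientGroup.lift _ (PresentedGroup.toGroup hφrels) hker).comp
        (Monoid.Coprod.lift (zmodMulHom k _ hybar) (zmodMulHom j _ hbbar)) = MonoidHom.id _ := by
      apply Monoid.Coprod.hom_ext
      · apply multZModHom_ext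
        simp only [MonoidHom.comp_apply, MonoidHom.id_apply, Monoid.Coprod.lift_apply_inl,
          zmodMulHom_ofAdd_one]
        rw [show ((QuotientGroup.lift _ (PresentedGroup.toGroup hφrels) hker)
            ((QuotientGroup.mk' _) (PresentedGroup.of 1 : PresentedGroup (relsFam2a k n))))
            = (PresentedGroup.toGroup hφrels) (PresentedGroup.of 1) from
          QuotientGroup.lift_mk' _ _ _]
        rw [PresentedGroup.toGroup.of, Matrix.cons_val_one, Matrix.cons_val_zero]
      · apply multZModHom_ext
        simp only [MonoidHom.comp_apply, MonoidHom.id_apply, Monoid.Coprod.lift_apply_inr,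
          zmodMulHom_ofAdd_one]
        rw [show ((QuotientGroup.lift _ (PresentedGroup.toGroup hφrels) hker)
            ((QuotientGroup.mk' _) (PresentedGroup.of 0 : PresentedGroup (relsFam2a k n))))
            = (PresentedGroup.toGroup hφrels) (PresentedGroup.of 0) from
          QuotientGroup.lift_mk' _ _ _]
        rw [PresentedGroup.toGroup.of, Matrix.cons_val_zero]
    exact ⟨MonoidHom.toMulEquiv _ _ hgf hfg⟩
  · -- Part 3: abelian if j = 1
    intro hj1 x y
    have hbez := Nat.gcd_eq_gcd_ab (k - 1) (n + 1)
    rw [← hj, hj1] at hbez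
    have hof0 : (PresentedGroup.of 0 : PresentedGroup (relsFam2a k n)) ∈
        Subgroup.zpowers (PresentedGroup.of 1 : PresentedGroup (relsFam2a k n)) := by
      have hcast : ((k - 1 : ℕ) : ℤ) * Nat.gcdA (k - 1) (n + 1)
          + ((n + 1 : ℕ) : ℤ) * Nat.gcdB (k - 1) (n + 1) = 1 := by
        rw [← hbez]
        norm_num
      have h' : (PresentedGroup.of 0 : PresentedGroup (relsFam2a k n)) =
          ((PresentedGroup.of 0 : PresentedGroup (relsFam2a k n)) ^ (k - 1)) ^
              (Nat.gcdA (k - 1) (n + 1)) *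
            ((PresentedGroup.of 0 : PresentedGroup (relsFam2a k n)) ^ (n + 1)) ^
              (Nat.gcdB (k - 1) (n + 1)) := by
        rw [← zpow_natCast (PresentedGroup.of 0 : PresentedGroup (relsFam2a k n)) (k - 1),
          ← zpow_natCast (PresentedGroup.of 0 : PresentedGroup (relsFam2a k n)) (n + 1),
          ← zpow_mul, ← zpow_mul, ← zpow_add, hcast, zpow_one]
      rw [h', e1', e2]
      exact Subgroup.mul_mem _
        (Subgroup.zpow_mem _ (Subgroup.inv_mem _
          (Subgroup.pow_mem _ (Subgroup.mem_zpowers _) k)) _)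
        (by rw [one_zpow]; exact Subgroup.one_mem _)
    have hall : ∀ g : PresentedGroup (relsFam2a k n),
        g ∈ Subgroup.zpowers (PresentedGroup.of 1 : PresentedGroup (relsFam2a k n)) := by
      intro g
      have hg : g ∈ Subgroup.closure
          (Set.range (PresentedGroup.of : Fin 2 → PresentedGroup (relsFam2a k n))) := by
        rw [PresentedGroup.closure_range_of]
        trivial
      have hle : Subgroup.closure
          (Set.range (PresentedGroup.of : Fin 2 → PresentedGroup (relsFam2a k n))) ≤
          Subgroup.zpowers (PresentedGroup.of 1 : PresentedGroup (relsFam2a k n)) := by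
        rw [Subgroup.closure_le]
        rintro _ ⟨i, rfl⟩
        fin_cases i
        · exact hof0
        · exact Subgroup.mem_zpowers _
      exact hle hg
    obtain ⟨mx, hmx⟩ := Subgroup.mem_zpowers_iff.mp (hall x)
    obtain ⟨my, hmy⟩ := Subgroup.mem_zpowers_iff.mp (hall y)
    rw [← hmx, ← hmy, ← zpow_add, ← zpow_add, add_comm]
  · -- Part 4: free subgroup
    intro hj2 _hnot
    have hk3 : 3 ≤ k := by
      have h1 : 0 < k - 1 := by omega
      have := Nat.le_of_dvd h1 hjdvd1
      omega
    have haane := fam2aA_ne k j (by omega)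
    have haa2 := fam2aA_sq_ne k j hk3
    have hbbne := fam2aB_ne k j hj2
    have haak := fam2aA_pow k j k (ZMod.natCast_self k)
    have hbbk1 := fam2aB_pow k j (k - 1) ((ZMod.natCast_eq_zero_iff (k - 1) j).mpr hjdvd1)
    have hbbn := fam2aB_pow k j (n + 1) ((ZMod.natCast_eq_zero_iff (n + 1) j).mpr hjdvd2)
    have hπrels : ∀ r ∈ relsFam2a k n, FreeGroup.lift
        (![CoprodI.of (fam2aB k j), CoprodI.of (fam2aA k j)] :
          Fin 2 → CoprodI (fam2aH k j)) r = 1 := by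
      intro r hr
      have hr' : r = ((FreeGroup.of (1 : Fin 2)) ^ k)⁻¹ * ((FreeGroup.of (0 : Fin 2)) ^ (k - 1))⁻¹
          ∨ r = (FreeGroup.of (0 : Fin 2)) ^ (n + 1) := by simpa [relsFam2a] using hr
      rcases hr' with rfl | rfl
      · simp only [map_mul, map_inv, map_pow, FreeGroup.lift_apply_of, Matrix.cons_val_one,
          Matrix.head_cons, Matrix.cons_val_zero]
        rw [← map_pow, ← map_pow, haak, hbbk1, map_one, map_one]
        simp
      · simp only [map_pow, FreeGroup.lift_apply_of, Matrix.cons_val_zero]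
        rw [← map_pow, hbbn, map_one]
    have hinj := freepair (fam2aH k j) (fam2aA k j) (fam2aB k j) haane haa2 hbbne
    have hcomp : (PresentedGroup.toGroup hπrels).comp (FreeGroup.lift
          ![(PresentedGroup.of 1 : PresentedGroup (relsFam2a k n)) * PresentedGroup.of 0 *
              PresentedGroup.of 1 * PresentedGroup.of 0,
            (PresentedGroup.of 1 : PresentedGroup (relsFam2a k n))⁻¹ * PresentedGroup.of 0 *
              (PresentedGroup.of 1)⁻¹ * PresentedGroup.of 0])
        = FreeGroup.lift
          ![CoprodI.of (fam2aA k j) * CoprodI.of (fam2aB k j) * CoprodI.of (fam2aA k j) *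
              CoprodI.of (fam2aB k j),
            CoprodI.of (fam2aA k j)⁻¹ * CoprodI.of (fam2aB k j) * CoprodI.of (fam2aA k j)⁻¹ *
              CoprodI.of (fam2aB k j)] := by
      apply FreeGroup.ext_hom
      intro i
      fin_cases i
      · simp [MonoidHom.comp_apply, map_mul, PresentedGroup.toGroup.of]
      · simp [MonoidHom.comp_apply, map_mul, map_inv, PresentedGroup.toGroup.of]
    refine ⟨FreeGroup.lift
      ![(PresentedGroup.of 1 : PresentedGroup (relsFam2a k n)) * PresentedGroup.of 0 *
          PresentedGroup.of 1 * PresentedGroup.of 0,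
        (PresentedGroup.of 1 : PresentedGroup (relsFam2a k n))⁻¹ * PresentedGroup.of 0 *
          (PresentedGroup.of 1)⁻¹ * PresentedGroup.of 0], ?_⟩
    have hinj2 : Function.Injective (⇑(PresentedGroup.toGroup hπrels) ∘ ⇑(FreeGroup.lift
        ![(PresentedGroup.of 1 : PresentedGroup (relsFam2a k n)) * PresentedGroup.of 0 *
            PresentedGroup.of 1 * PresentedGroup.of 0,
          (PresentedGroup.of 1 : PresentedGroup (relsFam2a k n))⁻¹ * PresentedGroup.of 0 *
            (PresentedGroup.of 1)⁻¹ * PresentedGroup.of 0])) := by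
      rw [← MonoidHom.coe_comp, hcomp]
      exact hinj
    exact Function.Injective.of_comp hinj2
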